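/- Let α be a finite type with decidable equality, let n : ℕ, and let x, y : Fin n → α. Then E(x) = E(y) if and only if x and y p-match, i.e., there exists a permutation π : Equiv.Perm α with π (x i) = y i for every i. -/
import Mathlib


/-- The predecessor occurrence of position `i` in `x`: the largest `j < i`
with `x j = x i`, as an element of `WithBot (Fin n)` (`⊥` when none exists). -/
def prevOcc {α : Type*} [DecidableEq α] {n : ℕ} (x : Fin n → α) (i : Fin n) :
    WithBot (Fin n) :=
  (Finset.univ.filter (fun j : Fin n => j < i ∧ x j = x i)).max

/-- Baker's encoding of a parameterized string: `E(x) i = i - prev_x(i)` when the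
previous occurrence exists, and `0` otherwise. -/
def encode {α : Type*} [DecidableEq α] {n : ℕ} (x : Fin n → α) (i : Fin n) : ℕ :=
  match prevOcc x i with
  | none => 0
  | some j => (i : ℕ) - (j : ℕ)

lemma prevOcc_some {α : Type*} [DecidableEq α] {n : ℕ} {x : Fin n → α} {i k : Fin n}
    (h : prevOcc x i = some k) : k < i ∧ x k = x i := by
  have := Finset.mem_of_max h
  simpa [Finset.mem_filter] using this

lemma prevOcc_ge {α : Type*} [DecidableEq α] {n : ℕ} {x : Fin n → α} {i j : Fin n}
    (hj : j < i) (hx : x j = x i) : ∃ k, prevOcc x i = some k ∧ j ≤ k := by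
  have hmem : j ∈ Finset.univ.filter (fun j : Fin n => j < i ∧ x j = x i) := by
    simp [Finset.mem_filter, hj, hx]
  have hle := Finset.le_max hmem
  obtain ⟨k, hk⟩ := Finset.max_of_mem hmem
  rw [hk] at hle
  exact ⟨k, hk, by exact_mod_cast hle⟩

lemma key_lemma {α : Type*} [DecidableEq α] {n : ℕ} {x y : Fin n → α}
    (h : prevOcc x = prevOcc y) : ∀ i j : Fin n, j ≤ i → x j = x i → y j = y i := by
  have H : ∀ m : ℕ, ∀ i j : Fin n, (i : ℕ) = m → j ≤ i → x j = x i → y j = y i := by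
    intro m
    induction m using Nat.strong_induction_on with
    | _ m IH =>
      intro i j hm hji hx
      rcases eq_or_lt_of_le hji with heq | hlt
      · rw [heq]
      · obtain ⟨k, hk, hjk⟩ := prevOcc_ge hlt hx
        obtain ⟨hki, hxk⟩ := prevOcc_some hk
        have hky : y k = y i := (prevOcc_some (h ▸ hk : prevOcc y i = some k)).2
        rcases eq_or_lt_of_le hjk with heq | hlt'
        · rw [heq]; exact hky
        · have : y j = y k := IH k (hm ▸ hki) k j rfl hlt'.le (hx.trans hxk.symm)
          exact this.trans hky
  exact fun i j => H i i j rfl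

theorem encode_eq_iff_pMatch {α : Type*} [Fintype α] [DecidableEq α] (n : ℕ)
    (x y : Fin n → α) :
    encode x = encode y ↔ ∃ π : Equiv.Perm α, ∀ i : Fin n, π (x i) = y i := by
  constructor
  · intro hE
    -- Step 1: prevOcc agree
    have hP : prevOcc x = prevOcc y := by
      funext i
      have hEi := congrFun hE i
      unfold encode at hEi
      cases hx : prevOcc x i with
      | bot =>
        cases hy : prevOcc y i with
        | bot => rfl
        | coe k =>
          exfalso
          have hki := (prevOcc_some hy).1
          rw [hx, hy] at hEi
          simp at hEi
          omega
      | coe j =>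
        cases hy : prevOcc y i with
        | bot =>
          exfalso
          have hji := (prevOcc_some hx).1
          rw [hx, hy] at hEi
          simp at hEi
          omega
        | coe k =>
          have hji := (prevOcc_some hx).1
          have hki := (prevOcc_some hy).1
          rw [hx, hy] at hEi
          simp at hEi
          have : (j : ℕ) = (k : ℕ) := by omega
          exact congrArg _ (Fin.ext this)
    have hxy : ∀ i j : Fin n, x i = x j → y i = y j := by
      intro i j hij
      rcases le_total i j with h' | h'
      · exact key_lemma hP j i h' hij
      · exact (key_lemma hP i j h' hij.symm).symm
    have hyx : ∀ i j : Fin n, y i = y j → x i = x j := by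
      intro i j hij
      rcases le_total i j with h' | h'
      · exact key_lemma hP.symm j i h' hij
      · exact (key_lemma hP.symm i j h' hij.symm).symm
    classical
    -- build equiv between ranges
    let p : α → Prop := fun a => ∃ i, x i = a
    let q : α → Prop := fun a => ∃ i, y i = a
    let g : {a // p a} → {a // q a} := fun s =>
      ⟨y (Classical.choose s.2), ⟨_, rfl⟩⟩
    have hg : ∀ (i : Fin n) (h : p (x i)), (g ⟨x i, h⟩ : α) = y i := by
      intro i h
      exact hxy _ _ (Classical.choose_spec h)
    have hginj : Function.Injective g := by
      rintro ⟨a, ha⟩ ⟨b, hb⟩ hab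
      obtain ⟨i, hi⟩ := ha
      obtain ⟨j, hj⟩ := hb
      subst hi; subst hj
      have : y i = y j := by
        have h1 := hg i ⟨i, rfl⟩
        have h2 := hg j ⟨j, rfl⟩
        rw [← h1, ← h2]
        exact congrArg _ hab
      exact Subtype.ext (hyx i j this)
    have hgsurj : Function.Surjective g := by
      rintro ⟨b, i, rfl⟩
      exact ⟨⟨x i, ⟨i, rfl⟩⟩, Subtype.ext (hg i ⟨i, rfl⟩)⟩
    let e : {a // p a} ≃ {a // q a} := Equiv.ofBijective g ⟨hginj, hgsurj⟩
    refine ⟨e.extendSubtype, fun i => ?_⟩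
    have := Equiv.extendSubtype_apply_of_mem e (x i) ⟨i, rfl⟩
    rw [this]
    exact hg i ⟨i, rfl⟩
  · rintro ⟨π, hπ⟩
    funext i
    have hpq : prevOcc x i = prevOcc y i := by
      unfold prevOcc
      congr 1
      apply Finset.filter_congr
      intro j _
      constructor
      · rintro ⟨hji, hx⟩; exact ⟨hji, by rw [← hπ j, ← hπ i, hx]⟩
      · rintro ⟨hji, hy⟩
        refine ⟨hji, π.injective ?_⟩
        rw [hπ j, hπ i, hy]
    unfold encode
    rw [hpq]
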